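/- Let f be a non-erasing morphism. If for some integer k ≥ 1 the morphism f^k (the k-fold composition of f) is weakly quasiperiodic on infinite words, then f is weakly quasiperiodic on infinite words. -/

import Mathlib

namespace QPm

variable {A : Type*}

/-- Image of a finite word under a morphism given by images of letters. -/
def applyF (f : A → List A) (w : List A) : List A := (w.map f).flatten

/-- A morphism is non-erasing if images of letters are nonempty. -/
def NonErasing (f : A → List A) : Prop := ∀ a, f a ≠ []

/-- `wpow u k` is the `k`-fold concatenation `u^k`. -/
def wpow (u : List A) (k : ℕ) : List A := (List.replicate k u).flatten

/-- Every position of `w` is covered by an occurrence of `q` in `w`. -/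
def Covers (q w : List A) : Prop :=
  ∀ i < w.length, ∃ j, j ≤ i ∧ i < j + q.length ∧ j + q.length ≤ w.length ∧
    (w.drop j).take q.length = q

/-- `w` is `q`-quasiperiodic. -/
def QP (q w : List A) : Prop := q ≠ [] ∧ w ≠ q ∧ Covers q w

def Quasiperiodic (w : List A) : Prop := ∃ q, QP q w

def Superprimitive (w : List A) : Prop := ¬ Quasiperiodic w

/-- `q` is THE quasiperiod (shortest quasiperiod) of `w`. -/
def IsQuasiperiod (q w : List A) : Prop :=
  QP q w ∧ ∀ q', QP q' w → q.length ≤ q'.length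

/-- Every position of the infinite word `x` is covered by an occurrence of `q`. -/
def InfCovers (q : List A) (x : ℕ → A) : Prop :=
  ∀ i : ℕ, ∃ j, j ≤ i ∧ i < j + q.length ∧
    ∀ t (ht : t < q.length), x (j + t) = q.get ⟨t, ht⟩

/-- The infinite word `x` is `q`-quasiperiodic. -/
def InfQP (q : List A) (x : ℕ → A) : Prop := q ≠ [] ∧ InfCovers q x

def InfQuasiperiodic (x : ℕ → A) : Prop := ∃ q, InfQP q x

/-- `q` is THE quasiperiod (shortest quasiperiod) of the infinite word `x`. -/
def IsInfQuasiperiod (q : List A) (x : ℕ → A) : Prop :=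
  InfQP q x ∧ ∀ q', InfQP q' x → q.length ≤ q'.length

/-- Image of an infinite word under a (non-erasing) morphism: the `n`-th letter
of `f(x)` is the `n`-th letter of the image of a sufficiently long prefix. -/
def mapInf (f : A → List A) (x : ℕ → A) (n : ℕ) : A :=
  (applyF f (List.ofFn (fun i : Fin (n + 1) => x i))).getD n (x 0)

/-- `f` maps every (nonempty) finite word to a quasiperiodic word. -/
def StronglyQPFin (f : A → List A) : Prop :=
  ∀ w : List A, w ≠ [] → Quasiperiodic (applyF f w)

/-- `f` maps every infinite word to a quasiperiodic infinite word. -/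
def StronglyQPInf (f : A → List A) : Prop :=
  ∀ x : ℕ → A, InfQuasiperiodic (mapInf f x)

/-- `f` maps some non-quasiperiodic finite word to a quasiperiodic word. -/
def WeaklyQPFin (f : A → List A) : Prop :=
  ∃ w : List A, ¬ Quasiperiodic w ∧ Quasiperiodic (applyF f w)

/-- `f` maps some non-quasiperiodic infinite word to a quasiperiodic word. -/
def WeaklyQPInf (f : A → List A) : Prop :=
  ∃ x : ℕ → A, ¬ InfQuasiperiodic x ∧ InfQuasiperiodic (mapInf f x)

/-- The ultimately periodic infinite word `u v^ω` (with default letter `d`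
used only when `v` is empty). -/
def ultPer (u v : List A) (d : A) : ℕ → A :=
  fun n => if h : n < u.length then u.get ⟨n, h⟩
           else v.getD ((n - u.length) % v.length) d

/-- A finite word is primitive if it is not a power `u^k` with `k ≥ 2`. -/
def Primitive (w : List A) : Prop :=
  ¬ ∃ (u : List A) (k : ℕ), 2 ≤ k ∧ w = wpow u k

/-- `k`-fold composition of the morphism `f`. -/
def iterF (f : A → List A) : ℕ → A → List A
  | 0, a => [a]
  | (k + 1), a => applyF f (iterF f k a)

lemma applyF_append (f : A → List A) (u v : List A) :
    applyF f (u ++ v) = applyF f u ++ applyF f v := by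
  simp [applyF]

lemma applyF_cons (f : A → List A) (a : A) (t : List A) :
    applyF f (a :: t) = f a ++ applyF f t := rfl

lemma length_applyF_le {f : A → List A} (hf : NonErasing f) (w : List A) :
    w.length ≤ (applyF f w).length := by
  induction w with
  | nil => simp [applyF]
  | cons a t ih =>
    have : 0 < (f a).length := List.length_pos_iff.mpr (hf a)
    rw [applyF_cons, List.length_append, List.length_cons]
    omega

lemma getD_append_left {l₁ l₂ : List A} {n : ℕ} (h : n < l₁.length) (d : A) :
    (l₁ ++ l₂).getD n d = l₁.getD n d := by
  rw [List.getD_eq_getElem _ _ (by simp only [List.length_append]; omega),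
      List.getD_eq_getElem _ _ h]
  exact List.getElem_append_left h

lemma applyF_comp (f g : A → List A) (w : List A) :
    applyF f (applyF g w) = applyF (fun a => applyF f (g a)) w := by
  induction w with
  | nil => rfl
  | cons a t ih => rw [applyF_cons, applyF_append, ih, applyF_cons]

lemma ofFn_prefix (x : ℕ → A) (n m : ℕ) (h : n ≤ m) :
    List.ofFn (fun i : Fin n => x i) = (List.ofFn (fun i : Fin m => x i)).take n := by
  apply List.ext_getElem
  · simp; omega
  · intro i h1 h2
    simp [List.getElem_take, List.getElem_ofFn]

lemma mapInf_eq_getD {f : A → List A} (hf : NonErasing f) (x : ℕ → A) (n m : ℕ)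
    (h : n < m) (d : A) :
    mapInf f x n = (applyF f (List.ofFn (fun i : Fin m => x i))).getD n d := by
  have hsplit : List.ofFn (fun i : Fin m => x i) =
      List.ofFn (fun i : Fin (n+1) => x i) ++ (List.ofFn (fun i : Fin m => x i)).drop (n+1) := by
    rw [ofFn_prefix x (n+1) m h, List.take_append_drop]
  have hlen : n < (applyF f (List.ofFn (fun i : Fin (n+1) => x i))).length := by
    have := length_applyF_le hf (List.ofFn (fun i : Fin (n+1) => x i))
    rw [List.length_ofFn] at this; omega
  rw [mapInf, hsplit, applyF_append, getD_append_left hlen,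
      List.getD_eq_getElem _ _ hlen, List.getD_eq_getElem _ _ hlen]

lemma mapInf_comp (f g : A → List A) (hf : NonErasing f) (hg : NonErasing g) (x : ℕ → A) :
    mapInf (fun a => applyF f (g a)) x = mapInf f (mapInf g x) := by
  funext n
  set y := mapInf g x with hy
  set L := applyF g (List.ofFn (fun i : Fin (n+1) => x i)) with hL
  have hLlen : n + 1 ≤ L.length := by
    have := length_applyF_le hg (List.ofFn (fun i : Fin (n+1) => x i))
    rwa [List.length_ofFn] at this
  have hpref : List.ofFn (fun i : Fin (n+1) => y i) = L.take (n+1) := by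
    apply List.ext_getElem
    · simp; omega
    · intro i h1 h2
      simp only [List.getElem_ofFn, List.getElem_take]
      have hi : i < n + 1 := by simpa using h1
      have : y i = L.getD i (x 0) := mapInf_eq_getD hg x i (n+1) hi (x 0)
      rw [this, List.getD_eq_getElem _ _ (by omega)]
  symm
  have hflen : n < (applyF f (L.take (n+1))).length := by
    have := length_applyF_le hf (L.take (n+1))
    rw [List.length_take] at this; omega
  calc mapInf f y n = (applyF f (L.take (n+1))).getD n (y 0) := by
        rw [mapInf, hpref]
    _ = (applyF f L).getD n (y 0) := by
        conv_rhs => rw [← List.take_append_drop (n+1) L, applyF_append]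
        rw [getD_append_left hflen]
    _ = mapInf (fun a => applyF f (g a)) x n := by
        rw [hL, applyF_comp]
        have hc : NonErasing (fun a => applyF f (g a)) := by
          intro a
          have h1 : 0 < (g a).length := List.length_pos_iff.mpr (hg a)
          have := length_applyF_le hf (g a)
          intro hcon
          simp only at hcon
          rw [hcon] at this; simp only [List.length_nil] at this; omega
        rw [mapInf_eq_getD hc x n (n+1) (Nat.lt_succ_self n) (y 0)]

lemma nonErasing_iterF {f : A → List A} (hf : NonErasing f) (k : ℕ) :
    NonErasing (iterF f k) := by
  induction k with
  | zero => intro a; simp [iterF]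
  | succ k ih =>
    intro a
    have h1 : 0 < (iterF f k a).length := List.length_pos_iff.mpr (ih a)
    have := length_applyF_le hf (iterF f k a)
    intro hcon
    rw [show iterF f (k+1) a = applyF f (iterF f k a) from rfl] at hcon
    rw [hcon] at this
    simp only [List.length_nil] at this; omega

lemma applyF_id (w : List A) : applyF (fun a => [a]) w = w := by
  induction w with
  | nil => rfl
  | cons a t ih => rw [applyF_cons, ih]; rfl

lemma mapInf_iter_zero (f : A → List A) (x : ℕ → A) :
    mapInf (iterF f 0) x = x := by
  funext n
  have : iterF f 0 = fun a => [a] := by funext a; rfl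
  rw [mapInf, this, applyF_id, List.getD_eq_getElem _ _ (by simp), List.getElem_ofFn]

lemma mapInf_iter_succ {f : A → List A} (hf : NonErasing f) (i : ℕ) (x : ℕ → A) :
    mapInf (iterF f (i+1)) x = mapInf f (mapInf (iterF f i) x) := by
  have h1 : iterF f (i+1) = fun a => applyF f (iterF f i a) := by funext a; rfl
  rw [h1, mapInf_comp f (iterF f i) hf (nonErasing_iterF hf i)]

theorem stmt17 {A : Type*} (f : A → List A) (hf : NonErasing f)
    (k : ℕ) (hk : 1 ≤ k) (h : WeaklyQPInf (iterF f k)) :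
    WeaklyQPInf f := by
  obtain ⟨x, hx, hqp⟩ := h
  have key : ∀ i, InfQuasiperiodic (mapInf (iterF f i) x) → WeaklyQPInf f := by
    intro i
    induction i with
    | zero => intro hc; rw [mapInf_iter_zero] at hc; exact absurd hc hx
    | succ i ih =>
      intro hc
      by_cases hi : InfQuasiperiodic (mapInf (iterF f i) x)
      · exact ih hi
      · exact ⟨mapInf (iterF f i) x, hi, by rwa [mapInf_iter_succ hf] at hc⟩
  exact key k hqp


end QPm
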